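/- Let a ≠ b be real numbers and let (i*_k)_{k∈ℤ} be an unpredictable sequence with values in {a, b}, with unpredictability constant ε₀ = |a − b| and sequences of positive integers ζ_n, η_n → ∞ satisfying: i*_{k+ζ_n} → i*_k as n → ∞ for each k in bounded intervals, and |i*_{ζ_n+η_n} − i*_{η_n}| ≥ ε₀ for all n. Define π(t) = i*_k for t ∈ [k, k+1) and χ(t) = ∫_{-∞}^{t} e^{−(t−s)} π(s) ds. Then χ is an unpredictable function: χ is uniformly continuous and bounded, χ(t + ζ_n) → χ(t) uniformly on compact subsets of ℝ, and there exist σ > 0, ε₁ > 0 and a sequence u_n → ∞ such that |χ(t + ζ_n) − χ(t)| ≥ ε₁ for all t ∈ [u_n − σ, u_n + σ] and all n. -/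

import Mathlib

open MeasureTheory Filter Set

/-- `χ(t) = ∫_{-∞}^t e^{-(t-s)} π(s) ds`. -/
noncomputable def chi (π : ℝ → ℝ) (t : ℝ) : ℝ :=
  ∫ s in Set.Iic t, Real.exp (-(t - s)) * π s

section aux

variable {π : ℝ → ℝ} {M : ℝ} (hm : Measurable π) (hb : ∀ s, |π s| ≤ M)

include hb in
lemma M_nonneg : 0 ≤ M := le_trans (abs_nonneg _) (hb 0)

include hm hb in
lemma integ_aux (t u : ℝ) :
    IntegrableOn (fun s => Real.exp (-(t - s)) * π s) (Set.Iic u) := by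
  have hM : 0 ≤ M := M_nonneg hb
  have hg : IntegrableOn (fun s => M * (Real.exp s * Real.exp (-t))) (Set.Iic u) :=
    ((integrableOn_exp_Iic u).mul_const _).const_mul M
  refine hg.mono' ?_ (Eventually.of_forall fun s => ?_)
  · exact ((Real.measurable_exp.comp (measurable_id.const_sub t).neg).mul hm).aestronglyMeasurable
  · have h1 : |Real.exp (-(t - s))| = Real.exp s * Real.exp (-t) := by
      rw [abs_of_pos (Real.exp_pos _), ← Real.exp_add]; ring_nf
    rw [Real.norm_eq_abs, abs_mul, h1]
    calc Real.exp s * Real.exp (-t) * |π s| ≤ Real.exp s * Real.exp (-t) * M := by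
          exact mul_le_mul_of_nonneg_left (hb s) (by positivity)
      _ = M * (Real.exp s * Real.exp (-t)) := by ring

include hm hb in
lemma tail_aux (u t : ℝ) :
    |∫ s in Set.Iic u, Real.exp (-(t - s)) * π s| ≤ M * Real.exp (u - t) := by
  have hM : 0 ≤ M := M_nonneg hb
  have h1 : |∫ s in Set.Iic u, Real.exp (-(t - s)) * π s|
      ≤ ∫ s in Set.Iic u, M * (Real.exp s * Real.exp (-t)) := by
    rw [← Real.norm_eq_abs]
    refine le_trans (norm_integral_le_integral_norm _) (integral_mono ?_ ?_ ?_)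
    · exact (integ_aux hm hb t u).norm
    · exact ((integrableOn_exp_Iic u).mul_const _).const_mul M
    · intro s
      have h1 : |Real.exp (-(t - s))| = Real.exp s * Real.exp (-t) := by
        rw [abs_of_pos (Real.exp_pos _), ← Real.exp_add]; ring_nf
      dsimp only
      rw [Real.norm_eq_abs, abs_mul, h1]
      calc Real.exp s * Real.exp (-t) * |π s| ≤ Real.exp s * Real.exp (-t) * M := by
            exact mul_le_mul_of_nonneg_left (hb s) (by positivity)
        _ = M * (Real.exp s * Real.exp (-t)) := by ring
  have h2 : ∫ s in Set.Iic u, M * (Real.exp s * Real.exp (-t))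
      = M * Real.exp (u - t) := by
    rw [integral_const_mul, integral_mul_const, integral_exp_Iic, ← Real.exp_add]
    ring_nf
  linarith [h1, h2.le, h2.ge]

include hm hb in
lemma chi_abs_le (t : ℝ) : |chi π t| ≤ M := by
  have := tail_aux hm hb t t
  simpa [chi] using this

include hm hb in
lemma chi_split {t0 t : ℝ} (h : t0 ≤ t) :
    chi π t = Real.exp (-(t - t0)) * chi π t0
      + ∫ s in Set.Ioc t0 t, Real.exp (-(t - s)) * π s := by
  have h1 : Set.Iic t0 ∪ Set.Ioc t0 t = Set.Iic t := Set.Iic_union_Ioc_eq_Iic h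
  rw [chi, ← h1, setIntegral_union (Set.Iic_disjoint_Ioc le_rfl) measurableSet_Ioc
    (integ_aux hm hb t t0) ((integ_aux hm hb t t).mono_set Set.Ioc_subset_Iic_self)]
  congr 1
  rw [chi, ← integral_const_mul]
  refine integral_congr_ae (Eventually.of_forall fun s => ?_)
  dsimp only
  rw [← mul_assoc, ← Real.exp_add]
  ring_nf

lemma chi_shift (t c : ℝ) :
    chi π (t + c) = ∫ s in Set.Iic t, Real.exp (-(t - s)) * π (s + c) := by
  have h0 : (fun x : ℝ => x + c) ⁻¹' (Set.Iic (t + c)) = Set.Iic t := by ext x; simp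
  have h1 := (measurePreserving_add_right volume c).setIntegral_preimage_emb
    (MeasurableEquiv.addRight c).measurableEmbedding
    (fun s => Real.exp (-(t + c - s)) * π s) (Set.Iic (t + c))
  rw [chi, ← h1, h0]
  simp only [add_sub_add_right_eq_sub]

include hm hb in
lemma chi_diff (c t : ℝ) :
    chi π (t + c) - chi π t = chi (fun s => π (s + c) - π s) t := by
  have hm' : Measurable (fun s => π (s + c)) := hm.comp (measurable_add_const c)
  have hb' : ∀ s, |π (s + c)| ≤ M := fun s => hb (s + c)
  rw [chi_shift, chi, chi, ← integral_sub (integ_aux hm' hb' t t) (integ_aux hm hb t t)]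
  refine integral_congr_ae (Eventually.of_forall fun s => ?_)
  ring

include hm hb in
lemma chi_lip {t t' : ℝ} (h : t ≤ t') : |chi π t' - chi π t| ≤ 2 * M * (t' - t) := by
  have hM : 0 ≤ M := M_nonneg hb
  have h1 : |chi π t| ≤ M := chi_abs_le hm hb t
  have h2 : |∫ s in Set.Ioc t t', Real.exp (-(t' - s)) * π s| ≤ M * (t' - t) := by
    have hvol : volume (Set.Ioc t t') < ⊤ := by
      rw [Real.volume_Ioc]; exact ENNReal.ofReal_lt_top
    have h3 := norm_setIntegral_le_of_norm_le_const (μ := volume) (s := Set.Ioc t t')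
      (f := fun s => Real.exp (-(t' - s)) * π s) (C := M) hvol ?_
    · rw [Real.volume_real_Ioc_of_le h] at h3
      simpa [Real.norm_eq_abs] using h3
    · intro x hx
      rw [Real.norm_eq_abs, abs_mul]
      have he : |Real.exp (-(t' - x))| ≤ 1 := by
        rw [abs_of_pos (Real.exp_pos _), ← Real.exp_zero]
        exact Real.exp_le_exp.2 (by have := hx.2; linarith)
      calc |Real.exp (-(t' - x))| * |π x| ≤ 1 * M :=
            mul_le_mul he (hb x) (abs_nonneg _) one_pos.le
        _ = M := one_mul M
  have hup : Real.exp (-(t' - t)) ≤ 1 := by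
    rw [← Real.exp_zero]; exact Real.exp_le_exp.2 (by linarith)
  have hlow : 1 - (t' - t) ≤ Real.exp (-(t' - t)) := by
    have := Real.add_one_le_exp (-(t' - t)); linarith
  have e1 : chi π t' - chi π t = (Real.exp (-(t' - t)) - 1) * chi π t
      + ∫ s in Set.Ioc t t', Real.exp (-(t' - s)) * π s := by
    rw [chi_split hm hb h]; ring
  rw [e1]
  calc |(Real.exp (-(t' - t)) - 1) * chi π t
        + ∫ s in Set.Ioc t t', Real.exp (-(t' - s)) * π s|
      ≤ |(Real.exp (-(t' - t)) - 1) * chi π t|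
        + |∫ s in Set.Ioc t t', Real.exp (-(t' - s)) * π s| := abs_add_le _ _
    _ ≤ (t' - t) * M + M * (t' - t) := by
        refine add_le_add ?_ h2
        rw [abs_mul, abs_of_nonpos (by linarith)]
        exact mul_le_mul (by linarith) h1 (abs_nonneg _) (by linarith)
    _ = 2 * M * (t' - t) := by ring

end aux

lemma int_const_Ioc {t0 t : ℝ} (h : t0 ≤ t) (D : ℝ) :
    ∫ s in Set.Ioc t0 t, Real.exp (-(t - s)) * D
      = (1 - Real.exp (-(t - t0))) * D := by
  rw [← intervalIntegral.integral_of_le h]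
  have h1 : ∀ s : ℝ, Real.exp (-(t - s)) * D = Real.exp s * (Real.exp (-t) * D) := by
    intro s
    rw [show -(t - s) = s + -t by ring, Real.exp_add]; ring
  simp_rw [h1]
  rw [intervalIntegral.integral_mul_const, integral_exp]
  have h2 : Real.exp t * Real.exp (-t) = 1 := by rw [← Real.exp_add]; simp
  have h3 : Real.exp (-(t - t0)) = Real.exp t0 * Real.exp (-t) := by
    rw [← Real.exp_add]; ring_nf
  rw [h3]
  linear_combination D * h2

/-- The main result: the function `χ` built from an unpredictable sequence `i*`
with values in `{a, b}` is an unpredictable function. -/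
theorem chi_unpredictable (a b : ℝ) (hab : a ≠ b) (i : ℤ → ℝ)
    (hi : ∀ k, i k = a ∨ i k = b)
    (ζ η : ℕ → ℕ) (hζpos : ∀ n, 0 < ζ n) (hηpos : ∀ n, 0 < η n)
    (hζ : Tendsto ζ atTop atTop) (hη : Tendsto η atTop atTop)
    (hconv : ∀ K : ℕ, ∀ ε > (0 : ℝ), ∃ N : ℕ, ∀ n ≥ N, ∀ k : ℤ,
      |k| ≤ (K : ℤ) → |i (k + ζ n) - i k| < ε)
    (hsep : ∀ n, |a - b| ≤ |i ((ζ n : ℤ) + (η n : ℤ)) - i ((η n : ℤ))|) :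
    UniformContinuous (chi (fun s => i ⌊s⌋)) ∧
    (∃ C : ℝ, ∀ t, |chi (fun s => i ⌊s⌋) t| ≤ C) ∧
    (∀ α β : ℝ, TendstoUniformlyOn
      (fun n t => chi (fun s => i ⌊s⌋) (t + ζ n)) (chi (fun s => i ⌊s⌋))
      atTop (Set.Icc α β)) ∧
    ∃ σ > (0 : ℝ), ∃ ε₁ > (0 : ℝ), ∃ u : ℕ → ℝ, Tendsto u atTop atTop ∧
      ∀ n : ℕ, ∀ t ∈ Set.Icc (u n - σ) (u n + σ),
        ε₁ ≤ |chi (fun s => i ⌊s⌋) (t + ζ n) - chi (fun s => i ⌊s⌋) t| := by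
  classical
  set π : ℝ → ℝ := fun s => i ⌊s⌋ with hπdef
  set M : ℝ := max |a| |b| with hMdef
  have hε₀ : (0:ℝ) < |a - b| := abs_pos.2 (sub_ne_zero.2 hab)
  set ε₀ : ℝ := |a - b| with hε₀def
  have hm : Measurable π := measurable_from_top.comp measurable_id.floor
  have hbv : ∀ k : ℤ, |i k| ≤ M := by
    intro k; rcases hi k with h | h <;> rw [h]
    · exact le_max_left _ _
    · exact le_max_right _ _
  have hb : ∀ s, |π s| ≤ M := fun s => hbv ⌊s⌋
  have hM0 : 0 < M := by
    rcases hi 0 with h | h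
    · rcases eq_or_ne a 0 with rfl | ha
      · have : b ≠ 0 := fun hb0 => hab (hb0.symm ▸ rfl)
        calc (0:ℝ) < |b| := abs_pos.2 this
          _ ≤ M := le_max_right _ _
      · calc (0:ℝ) < |a| := abs_pos.2 ha
          _ ≤ M := le_max_left _ _
    · rcases eq_or_ne a 0 with rfl | ha
      · have : b ≠ 0 := fun hb0 => hab (hb0.symm ▸ rfl)
        calc (0:ℝ) < |b| := abs_pos.2 this
          _ ≤ M := le_max_right _ _
      · calc (0:ℝ) < |a| := abs_pos.2 ha
          _ ≤ M := le_max_left _ _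
  -- values lemmas
  have heqc : ∀ x y : ℤ, |i x - i y| < ε₀ → i x = i y := by
    intro x y hxy
    rcases hi x with h1 | h1 <;> rcases hi y with h2 | h2 <;> rw [h1, h2] at hxy ⊢
    · exact absurd hxy (by rw [hε₀def]; exact lt_irrefl _)
    · exact absurd hxy (by rw [hε₀def, abs_sub_comm]; exact lt_irrefl _)
  have hdle : ∀ x y : ℤ, |i x - i y| ≤ ε₀ := by
    intro x y
    rcases hi x with h1 | h1 <;> rcases hi y with h2 | h2 <;> rw [h1, h2] <;>
      simp [hε₀def, abs_sub_comm, hε₀.le]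
  -- floor shift
  have hfl : ∀ (s : ℝ) (m : ℕ), (⌊s + (m:ℝ)⌋ : ℤ) = ⌊s⌋ + (m:ℤ) := by
    intro s m
    rw [show ((m:ℕ):ℝ) = ((m:ℤ):ℝ) by push_cast; ring, Int.floor_add_intCast]
  -- shifted π
  have hmq : ∀ c : ℝ, Measurable (fun s => π (s + c) - π s) :=
    fun c => (hm.comp (measurable_add_const c)).sub hm
  have hbq : ∀ (c : ℝ) (s : ℝ), |π (s + c) - π s| ≤ 2 * M := by
    intro c s
    calc |π (s + c) - π s| ≤ |π (s + c)| + |π s| := abs_sub _ _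
      _ ≤ 2 * M := by have := hb (s + c); have := hb s; linarith
  refine ⟨?_, ⟨M, fun t => chi_abs_le hm hb t⟩, ?_, ?_⟩
  · -- uniform continuity
    rw [Metric.uniformContinuous_iff]
    intro ε hε
    refine ⟨ε / (2 * M + 1), by positivity, ?_⟩
    have h5 : 2 * M * (ε / (2 * M + 1)) < ε := by
      rw [mul_div_assoc', div_lt_iff₀ (by positivity)]
      nlinarith [hM0, hε]
    have key : ∀ x y : ℝ, x ≤ y → |x - y| < ε / (2 * M + 1) →
        |chi π y - chi π x| < ε := by
      intro x y hle hxy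
      have h6 : y - x ≤ |x - y| := by rw [abs_sub_comm]; exact le_abs_self _
      calc |chi π y - chi π x| ≤ 2 * M * (y - x) := chi_lip hm hb hle
        _ ≤ 2 * M * |x - y| := by
            exact mul_le_mul_of_nonneg_left h6 (by positivity)
        _ < ε := by
            calc 2 * M * |x - y| ≤ 2 * M * (ε / (2 * M + 1)) :=
                  mul_le_mul_of_nonneg_left hxy.le (by positivity)
              _ < ε := h5
    intro x y hxy
    rw [Real.dist_eq] at hxy ⊢
    rcases le_total x y with hle | hle
    · rw [abs_sub_comm]; exact key x y hle hxy
    · rw [abs_sub_comm] at hxy; exact key y x hle hxy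
  · -- uniform convergence on compact intervals
    intro α β
    rcases lt_or_ge β α with hαβ | hαβ
    · rw [Set.Icc_eq_empty (not_le.2 hαβ)]
      exact tendstoUniformlyOn_empty
    rw [Metric.tendstoUniformlyOn_iff]
    intro ε hε
    obtain ⟨K, hK⟩ := exists_nat_ge (max (|α| + |β| + 1) (2 * M * Real.exp (-α) / ε))
    have hK1 : |α| + |β| + 1 ≤ (K:ℝ) := le_trans (le_max_left _ _) hK
    have hK2 : 2 * M * Real.exp (-α) / ε ≤ (K:ℝ) := le_trans (le_max_right _ _) hK
    have hKpos : (0:ℝ) < (K:ℝ) + 1 := by positivity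
    have hdecay : 2 * M * Real.exp (-(α + (K:ℝ))) < ε := by
      have e1 : Real.exp (-(α + (K:ℝ))) = Real.exp (-α) * Real.exp (-(K:ℝ)) := by
        rw [← Real.exp_add]; ring_nf
      have e2 : Real.exp (-(K:ℝ)) ≤ 1 / ((K:ℝ) + 1) := by
        rw [Real.exp_neg, inv_eq_one_div]
        exact one_div_le_one_div_of_le hKpos
          (by have := Real.add_one_le_exp (K:ℝ); linarith)
      have e3 : 2 * M * Real.exp (-α) ≤ (K:ℝ) * ε := by
        rw [div_le_iff₀ hε] at hK2; linarith
      have e4 : ((K:ℝ) * ε) * (1 / ((K:ℝ) + 1)) < ε := by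
        rw [mul_one_div, div_lt_iff₀ hKpos]; nlinarith
      calc 2 * M * Real.exp (-(α + (K:ℝ)))
          = (2 * M * Real.exp (-α)) * Real.exp (-(K:ℝ)) := by rw [e1]; ring
        _ ≤ ((K:ℝ) * ε) * (1 / ((K:ℝ) + 1)) :=
            mul_le_mul e3 e2 (Real.exp_pos _).le (by positivity)
        _ < ε := e4
    obtain ⟨N, hN⟩ := hconv K ε₀ hε₀
    rw [eventually_atTop]
    refine ⟨N, fun n hn t ht => ?_⟩
    set c : ℝ := ((ζ n : ℕ) : ℝ) with hc
    have hKα : -(K:ℝ) ≤ t := by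
      have := ht.1; have := neg_abs_le α; linarith [abs_nonneg β, hK1]
    have hq0 : ∀ s ∈ Set.Ioc (-(K:ℝ)) t, π (s + c) - π s = 0 := by
      intro s hs
      have hfloor_lb : (-(K:ℤ)) ≤ ⌊s⌋ := by
        rw [Int.le_floor]; push_cast; linarith [hs.1.le]
      have hfloor_ub : ⌊s⌋ ≤ (K:ℤ) := by
        have h7 : (⌊s⌋:ℝ) ≤ s := Int.floor_le s
        have h8 : (⌊s⌋:ℝ) ≤ (K:ℝ) := by
          have := ht.2; have hβ : β ≤ |β| := le_abs_self β
          linarith [hs.2, abs_nonneg α, hK1]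
        exact_mod_cast h8
      have habs : |⌊s⌋| ≤ (K:ℤ) := abs_le.2 ⟨hfloor_lb, hfloor_ub⟩
      have heq := heqc _ _ (hN n hn ⌊s⌋ habs)
      show i ⌊s + c⌋ - i ⌊s⌋ = 0
      rw [hc, hfl s (ζ n), heq, sub_self]
    have hdiff := chi_diff hm hb c t
    have hsplit := chi_split (π := fun s => π (s + c) - π s) (M := 2*M)
      (hmq c) (hbq c) hKα
    have hzero : ∫ s in Set.Ioc (-(K:ℝ)) t,
        Real.exp (-(t - s)) * (π (s + c) - π s) = 0 := by
      have heqon : EqOn (fun s => Real.exp (-(t - s)) * (π (s + c) - π s))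
          (fun _ => (0:ℝ)) (Set.Ioc (-(K:ℝ)) t) := by
        intro s hs; simp only; rw [hq0 s hs, mul_zero]
      rw [setIntegral_congr_fun measurableSet_Ioc heqon, integral_zero]
    have hb2 : |chi (fun s => π (s + c) - π s) (-(K:ℝ))| ≤ 2*M :=
      chi_abs_le (hmq c) (hbq c) _
    rw [Real.dist_eq]
    have e7 : chi π t - chi π (t + c)
        = -(chi (fun s => π (s + c) - π s) t) := by rw [← hdiff]; ring
    rw [e7, abs_neg, hsplit, hzero, add_zero, abs_mul,
      abs_of_pos (Real.exp_pos _)]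
    calc Real.exp (-(t - -(K:ℝ))) * |chi (fun s => π (s + c) - π s) (-(K:ℝ))|
        ≤ Real.exp (-(α + (K:ℝ))) * (2*M) := by
          refine mul_le_mul ?_ hb2 (abs_nonneg _) (Real.exp_pos _).le
          exact Real.exp_le_exp.2 (by have := ht.1; linarith)
      _ < ε := by linarith [hdecay]
  · -- separation
    refine ⟨1/100, by norm_num, ε₀/16, by positivity, ?_⟩
    set u : ℕ → ℝ := fun n =>
      (η n : ℝ) + (if ε₀/8 ≤ |chi (fun s => π (s + ((ζ n : ℕ) : ℝ)) - π s) ((η n : ℕ) : ℝ)|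
        then (1/100 : ℝ) else 3/4) with hu
    refine ⟨u, ?_, ?_⟩
    · refine tendsto_atTop_mono (fun n => ?_) (tendsto_natCast_atTop_atTop.comp hη)
      simp only [hu]
      split_ifs <;> simp <;> norm_num
    · intro n t ht
      set c : ℝ := ((ζ n : ℕ) : ℝ) with hc
      set q : ℝ → ℝ := fun s => π (s + c) - π s with hqdef
      set N : ℝ := ((η n : ℕ) : ℝ) with hNdef
      set D : ℝ := i ((η n : ℤ) + (ζ n : ℤ)) - i ((η n : ℤ)) with hD
      have hDl : ε₀ ≤ |D| := by
        rw [hD, show (η n:ℤ) + (ζ n:ℤ) = (ζ n:ℤ) + (η n:ℤ) from add_comm _ _]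
        exact hsep n
      have hDu : |D| ≤ ε₀ := hdle _ _
      have key : ∀ r ∈ Set.Icc N (N + 1), chi q r
          = Real.exp (-(r - N)) * chi q N + (1 - Real.exp (-(r - N))) * D := by
        intro r hr
        rw [chi_split (hmq c) (hbq c) hr.1]
        congr 1
        have heqon : EqOn (fun s => Real.exp (-(r - s)) * q s)
            (fun s => Real.exp (-(r - s)) * D) (Set.Ioo N r) := by
          intro s hs
          simp only
          congr 1
          have h1 : N ≤ s := hs.1.le
          have h2 : s < N + 1 := lt_of_lt_of_le hs.2 hr.2
          have hfloor : ⌊s⌋ = ((η n : ℕ) : ℤ) := by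
            rw [Int.floor_eq_iff]
            constructor
            · rw [hNdef] at h1; exact_mod_cast h1
            · rw [hNdef] at h2; push_cast; push_cast at h2; linarith
          show i ⌊s + c⌋ - i ⌊s⌋ = D
          rw [hc, hfl s (ζ n), hfloor, hD]
        rw [integral_Ioc_eq_integral_Ioo, setIntegral_congr_fun measurableSet_Ioo heqon,
          ← integral_Ioc_eq_integral_Ioo, int_const_Ioc hr.1]
      have hsum : chi π (t + c) - chi π t = chi q t := chi_diff hm hb c t
      rw [hsum]
      have hif : u n = N + (if ε₀/8 ≤ |chi q N| then (1/100:ℝ) else 3/4) := rfl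
      have hqb : |chi q N| ≤ 2 * M := chi_abs_le (hmq c) (hbq c) _
      rcases le_or_gt (ε₀/8) |chi q N| with hcase | hcase
      · -- big at N : stay near N
        rw [hif, if_pos hcase] at ht
        have ht1 : N ≤ t := by linarith [ht.1]
        have ht2 : t ≤ N + 1/50 := by linarith [ht.2]
        have hform := key t ⟨ht1, by linarith⟩
        have hr1 : (0:ℝ) ≤ t - N := by linarith
        have hr2 : t - N ≤ 1/50 := by linarith
        have hexp1 : 1 - (t - N) ≤ Real.exp (-(t - N)) := by
          have := Real.add_one_le_exp (-(t - N)); linarith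
        have hexp2 : Real.exp (-(t - N)) ≤ 1 := by
          rw [← Real.exp_zero]; exact Real.exp_le_exp.2 (by linarith)
        have h9 : |Real.exp (-(t - N)) * chi q N| - |(1 - Real.exp (-(t - N))) * D|
            ≤ |chi q t| := by
          rw [hform]
          have := abs_sub_abs_le_abs_sub (Real.exp (-(t - N)) * chi q N)
            (-((1 - Real.exp (-(t - N))) * D))
          rwa [abs_neg, sub_neg_eq_add] at this
        rw [abs_mul, abs_mul, abs_of_pos (Real.exp_pos _),
          abs_of_nonneg (by linarith : (0:ℝ) ≤ 1 - Real.exp (-(t - N)))] at h9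
        have hA : (1 - (t - N)) * (ε₀/8) ≤ Real.exp (-(t - N)) * |chi q N| :=
          mul_le_mul hexp1 hcase (by positivity) (Real.exp_pos _).le
        have hB : (1 - Real.exp (-(t - N))) * |D| ≤ (t - N) * ε₀ :=
          mul_le_mul (by linarith) hDu (abs_nonneg _) hr1
        nlinarith [mul_le_mul_of_nonneg_right hr2 hε₀.le]
      · -- small at N : go to N + 3/4
        rw [hif, if_neg (not_le.2 hcase)] at ht
        have ht1 : N + 1/2 ≤ t := by linarith [ht.1]
        have ht2 : t ≤ N + 1 := by linarith [ht.2]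
        have hform := key t ⟨by linarith, ht2⟩
        have hexp3 : Real.exp (-(t - N)) ≤ 2/3 := by
          have e5 : Real.exp (-(t - N)) ≤ Real.exp (-(1/2 : ℝ)) :=
            Real.exp_le_exp.2 (by linarith)
          have e6 : Real.exp (-(1/2 : ℝ)) ≤ 2/3 := by
            rw [Real.exp_neg]
            have h7 : (3/2 : ℝ) ≤ Real.exp (1/2) := by
              have := Real.add_one_le_exp (1/2 : ℝ); linarith
            rw [inv_le_comm₀ (Real.exp_pos _) (by norm_num)]
            linarith
          linarith
        have h9 : |(1 - Real.exp (-(t - N))) * D| - |Real.exp (-(t - N)) * chi q N|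
            ≤ |chi q t| := by
          rw [hform]
          have h10 := abs_sub_abs_le_abs_sub ((1 - Real.exp (-(t - N))) * D)
            (-(Real.exp (-(t - N)) * chi q N))
          rw [abs_neg, sub_neg_eq_add] at h10
          rw [show (1 - Real.exp (-(t - N))) * D + Real.exp (-(t - N)) * chi q N
            = Real.exp (-(t - N)) * chi q N + (1 - Real.exp (-(t - N))) * D
            from add_comm _ _] at h10
          exact h10
        rw [abs_mul, abs_mul, abs_of_pos (Real.exp_pos _),
          abs_of_nonneg (by nlinarith [Real.exp_pos (-(t - N))] :
            (0:ℝ) ≤ 1 - Real.exp (-(t - N)))] at h9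
        have hA : (1/3) * ε₀ ≤ (1 - Real.exp (-(t - N))) * |D| :=
          mul_le_mul (by linarith) hDl hε₀.le (by linarith)
        have hB : Real.exp (-(t - N)) * |chi q N| ≤ (2/3) * (ε₀/8) :=
          mul_le_mul hexp3 hcase.le (abs_nonneg _) (by norm_num)
        linarith
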